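/- Let p be a prime and d, m, r, s positive integers with p ≡ 1 (mod d), d dividing m, d odd, q = p^m, and s = (q−1)/d. If gcd(r, s) = 1, then for all integers k and e one has gcd(2r + (k−1)es, d) = 1. (In particular, the condition gcd(2r + (k−1)es, d) = 1 is superfluous in the criteria of Akbary–Wang type under these hypotheses.) -/

import Mathlib

/-- Let p be prime and d, m, r, s > 0 with p ≡ 1 (mod d), d ∣ m, d odd, q = p^m,
s = (q−1)/d. If gcd(r, s) = 1, then for all integers k and e,
gcd(2r + (k−1)es, d) = 1. -/
theorem stmt_14 {p d m r s q : ℕ} (hp : p.Prime) (hd : 0 < d) (hm : 0 < m)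
    (hr : 0 < r) (hs0 : 0 < s) (hcong : p ≡ 1 [MOD d]) (hdm : d ∣ m) (hodd : Odd d)
    (hq : q = p ^ m) (hs : s = (q - 1) / d) (hrs : Nat.gcd r s = 1) :
    ∀ k e : ℤ, Int.gcd (2 * (r : ℤ) + (k - 1) * e * (s : ℤ)) (d : ℤ) = 1 := by
  have : NeZero d := ⟨hd.ne'⟩
  have hp2 : 2 ≤ p := hp.two_le
  have hpm1 : 1 ≤ p ^ m := Nat.one_le_pow _ _ (by omega)
  -- d ∣ p - 1
  have hd1 : d ∣ p - 1 := (Nat.modEq_iff_dvd' (by omega : 1 ≤ p)).mp hcong.symm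
  have hd1' : (d : ℤ) ∣ (p : ℤ) - 1 := by
    have := Int.natCast_dvd_natCast.mpr hd1
    rwa [Nat.cast_sub (by omega : 1 ≤ p), Nat.cast_one] at this
  -- d ∣ geometric sum
  have hdsum : (d : ℤ) ∣ ∑ i ∈ Finset.range m, (p : ℤ) ^ i := by
    have hz : ((∑ i ∈ Finset.range m, (p : ℤ) ^ i : ℤ) : ZMod d) = 0 := by
      push_cast
      have hp1' : (p : ZMod d) = 1 := by
        have := (ZMod.natCast_eq_natCast_iff _ _ _).mpr hcong
        simpa using this
      simp [hp1', Finset.sum_const, (ZMod.natCast_eq_zero_iff m d).mpr hdm]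
    exact (ZMod.intCast_zmod_eq_zero_iff_dvd _ _).mp hz
  -- d*d ∣ p^m - 1 in ℤ
  have hdd : (d : ℤ) * d ∣ (p : ℤ) ^ m - 1 := by
    rw [← geom_sum_mul]
    exact mul_dvd_mul hdsum hd1'
  -- d*d ∣ q - 1 in ℕ
  have hddn : d * d ∣ q - 1 := by
    have : ((d * d : ℕ) : ℤ) ∣ ((q - 1 : ℕ) : ℤ) := by
      rw [Nat.cast_sub (by omega : 1 ≤ q), Nat.cast_one, hq]
      push_cast
      exact hdd
    exact_mod_cast this
  -- d ∣ s
  have hdq : d ∣ q - 1 := dvd_trans (Dvd.intro d rfl) hddn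
  have hdsn : d ∣ s := by
    rw [hs]
    exact (Nat.dvd_div_iff_mul_dvd hdq).mpr (by rwa [mul_comm] at hddn)
  obtain ⟨s', hs'⟩ := hdsn
  -- coprimality facts
  have h2d : Nat.Coprime 2 d := Nat.coprime_two_left.mpr hodd
  have hrd : Nat.Coprime r d := Nat.Coprime.coprime_dvd_right ⟨s', hs'⟩ hrs
  intro k e
  have key : 2 * (r : ℤ) + (k - 1) * e * (s : ℤ)
      = 2 * (r : ℤ) + ((k - 1) * e * s') * d := by
    rw [hs']; push_cast; ring
  rw [key, ← Int.isCoprime_iff_gcd_eq_one]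
  have base : IsCoprime (2 * (r : ℤ)) (d : ℤ) := by
    rw [Int.isCoprime_iff_gcd_eq_one]
    have : (2 * (r : ℤ)) = ((2 * r : ℕ) : ℤ) := by push_cast; ring
    rw [this, Int.gcd_natCast_natCast]
    exact Nat.Coprime.mul h2d hrd
  exact base.add_mul_right_left _
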